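/- Let ε > 0. If two RochetNet menus M1 and M2, both indexed by {0,1,...,K}, satisfy K+1 ≥ ⌈4/ε²⌉^{2n}, then they are ε-mode-connected; moreover, the continuous path connecting them can be taken piecewise linear with only five linear pieces. -/

import Mathlib

open MeasureTheory Finset

namespace RN

/-- A RochetNet menu: for each of the `K+1` option indices, an allocation in `[0,1]^n`
and a price. -/
abbrev Menu (n K : ℕ) := Fin (K + 1) → (Fin n → ℝ) × ℝ

/-- Inner product of a valuation and an allocation. -/
def dotp {n : ℕ} (v x : Fin n → ℝ) : ℝ := ∑ j, v j * x j

/-- A valid menu: allocations in `[0,1]^n`, nonnegative prices, default option `(0,0)`. -/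
def IsMenu {n K : ℕ} (M : Menu n K) : Prop :=
  (∀ k j, 0 ≤ (M k).1 j ∧ (M k).1 j ≤ 1) ∧ (∀ k, 0 ≤ (M k).2) ∧ M 0 = 0

/-- Utility of option `k` for valuation `v`. -/
def util {n K : ℕ} (M : Menu n K) (v : Fin n → ℝ) (k : Fin (K + 1)) : ℝ :=
  dotp v (M k).1 - (M k).2

/-- Price extracted at valuation `v`: the maximal price among utility-maximizing options. -/
noncomputable def price {n K : ℕ} (M : Menu n K) (v : Fin n → ℝ) : ℝ :=
  sSup {p : ℝ | ∃ k, (∀ k', util M v k' ≤ util M v k) ∧ p = (M k).2}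

/-- Option `k` is the buyer's selected option at `v`: it maximizes utility and, among
utility maximizers, has maximal price. -/
def Selected {n K : ℕ} (M : Menu n K) (v : Fin n → ℝ) (k : Fin (K + 1)) : Prop :=
  (∀ k', util M v k' ≤ util M v k) ∧ (M k).2 = price M v

/-- The set of valuations. -/
def V (n : ℕ) : Set (Fin n → ℝ) :=
  {v | (∀ j, 0 ≤ v j ∧ v j ≤ 1) ∧ ∑ j, v j ≤ 1}

/-- Expected revenue of menu `M` under valuation distribution `F`. -/
noncomputable def Rev {n K : ℕ} (F : Measure (Fin n → ℝ)) (M : Menu n K) : ℝ :=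
  ∫ v, price M v ∂F

/-- Option-wise convex combination `lam • M + (1 - lam) • M'` of two menus. -/
noncomputable def comb {n K : ℕ} (lam : ℝ) (M M' : Menu n K) : Menu n K :=
  fun k => (fun j => lam * (M k).1 j + (1 - lam) * (M' k).1 j,
            lam * (M k).2 + (1 - lam) * (M' k).2)

/-- `M` is `ε`-reducible: some subset `K'` of options containing the default option, of
cardinality at most `√(K+1)`, contains the buyer's selected option with probability
at least `1 - ε`. -/
def Reducible {n K : ℕ} (F : Measure (Fin n → ℝ)) (M : Menu n K) (ε : ℝ) : Prop :=
  ∃ K' : Finset (Fin (K + 1)), 0 ∈ K' ∧ (K'.card : ℝ) ≤ Real.sqrt (K + 1) ∧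
    (F {v | ∃ k ∈ K', Selected M v k}).toReal ≥ 1 - ε

/-- `M₁` and `M₂` are `ε`-mode-connected by a piecewise linear path with `pieces` linear
pieces, all whose menus are valid and have revenue at least `min (Rev M₁) (Rev M₂) - ε`. -/
def PLConnected {n K : ℕ} (F : Measure (Fin n → ℝ)) (M₁ M₂ : Menu n K) (ε : ℝ)
    (pieces : ℕ) : Prop :=
  ∃ P : Fin (pieces + 1) → Menu n K, P 0 = M₁ ∧ P (Fin.last pieces) = M₂ ∧
    (∀ i, IsMenu (P i)) ∧
    ∀ i : Fin pieces, ∀ lam ∈ Set.Icc (0 : ℝ) 1,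
      Rev F (comb lam (P i.castSucc) (P i.succ)) ≥ min (Rev F M₁) (Rev F M₂) - ε

section Aux

variable {n K : ℕ}

/-- The finset of utility-maximizing options. -/
noncomputable def argmaxSet (M : Menu n K) (v : Fin n → ℝ) : Finset (Fin (K + 1)) :=
  univ.filter (fun k => ∀ k', util M v k' ≤ util M v k)

lemma argmaxSet_nonempty (M : Menu n K) (v : Fin n → ℝ) : (argmaxSet M v).Nonempty := by
  obtain ⟨k, -, hk⟩ := Finset.exists_max_image univ (util M v) ⟨0, mem_univ 0⟩
  exact ⟨k, by simpa [argmaxSet] using fun k' => hk k' (mem_univ k')⟩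

lemma price_eq_max' (M : Menu n K) (v : Fin n → ℝ) :
    price M v = ((argmaxSet M v).image (fun k => (M k).2)).max'
      ((argmaxSet_nonempty M v).image _) := by
  have hset : {p : ℝ | ∃ k, (∀ k', util M v k' ≤ util M v k) ∧ p = (M k).2}
      = ↑((argmaxSet M v).image (fun k => (M k).2)) := by
    ext p
    simp only [Set.mem_setOf_eq, coe_image, Set.mem_image, mem_coe, argmaxSet, mem_filter,
      mem_univ, true_and]
    constructor
    · rintro ⟨k, hk, rfl⟩; exact ⟨k, hk, rfl⟩
    · rintro ⟨k, hk, rfl⟩; exact ⟨k, hk, rfl⟩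
  rw [price, hset, Finset.Nonempty.csSup_eq_max']

/-- There is an argmax option realizing the price. -/
lemma exists_price_witness (M : Menu n K) (v : Fin n → ℝ) :
    ∃ k, (∀ k', util M v k' ≤ util M v k) ∧ (M k).2 = price M v := by
  have h := price_eq_max' M v
  have hmem := Finset.max'_mem _ ((argmaxSet_nonempty M v).image (fun k => (M k).2))
  rw [← h] at hmem
  obtain ⟨k, hk, hkp⟩ := Finset.mem_image.1 hmem
  exact ⟨k, by simpa [argmaxSet] using hk, hkp⟩

/-- Any argmax option's price is at most the extracted price. -/
lemma price_ge (M : Menu n K) (v : Fin n → ℝ) {k : Fin (K + 1)}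
    (hk : ∀ k', util M v k' ≤ util M v k) : (M k).2 ≤ price M v := by
  rw [price_eq_max' M v]
  apply Finset.le_max'
  exact Finset.mem_image.2 ⟨k, mem_filter.2 ⟨mem_univ k, hk⟩, rfl⟩

lemma price_nonneg {M : Menu n K} (hM : ∀ k, 0 ≤ (M k).2) (v : Fin n → ℝ) :
    0 ≤ price M v := by
  obtain ⟨k, hk, hkp⟩ := exists_price_witness M v
  rw [← hkp]; exact hM k

lemma dotp_zero (v : Fin n → ℝ) : dotp v (0 : Fin n → ℝ) = 0 := by
  simp [dotp]

lemma dotp_nonneg_le_one {v x : Fin n → ℝ} (hv : v ∈ V n)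
    (hx : ∀ j, 0 ≤ x j ∧ x j ≤ 1) : dotp v x ≤ 1 := by
  calc dotp v x ≤ ∑ j, v j := by
        apply Finset.sum_le_sum
        intro j _
        have := hv.1 j
        have := hx j
        nlinarith [this.1, this.2]
    _ ≤ 1 := hv.2

lemma price_le_one {M : Menu n K} (hM : IsMenu M) {v : Fin n → ℝ} (hv : v ∈ V n) :
    price M v ≤ 1 := by
  obtain ⟨k, hk, hkp⟩ := exists_price_witness M v
  have h0 : util M v 0 = 0 := by
    rw [util, hM.2.2]
    simp [dotp_zero]
  have hutil : 0 ≤ util M v k := h0 ▸ hk 0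
  have hd : dotp v (M k).1 ≤ 1 := dotp_nonneg_le_one hv (hM.1 k)
  rw [← hkp]
  have := hutil
  rw [util] at this
  linarith

end Aux

section Meas

variable {n K : ℕ}

lemma measurable_dotp (x : Fin n → ℝ) : Measurable (fun v : Fin n → ℝ => dotp v x) := by
  unfold dotp
  exact Finset.measurable_sum _ (fun j _ => (measurable_pi_apply j).mul_const _)

lemma measurable_util (M : Menu n K) (k : Fin (K + 1)) :
    Measurable (fun v => util M v k) := by
  unfold util
  exact (measurable_dotp _).sub measurable_const

lemma measurable_fin_sup' {ι : Type*} {α : Type*} [MeasurableSpace α]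
    (s : Finset ι) (hs : s.Nonempty) (f : ι → α → ℝ) (hf : ∀ i, Measurable (f i)) :
    Measurable (fun v => s.sup' hs (fun i => f i v)) := by
  classical
  refine Finset.Nonempty.cons_induction
    (motive := fun s hs => Measurable fun v => s.sup' hs fun i => f i v) ?_ ?_ hs
  · intro a
    simpa using hf a
  · intro a s ha hs ih
    have heq : (fun v => (Finset.cons a s ha).sup' (Finset.cons_nonempty ha) fun i => f i v)
        = fun v => max (f a v) (s.sup' hs fun i => f i v) := by
      funext v
      exact Finset.sup'_cons (H := hs) (hb := ha) (f := fun i => f i v)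
    rw [heq]
    exact (hf a).max ih

open Classical in
lemma measurable_price (M : Menu n K) : Measurable (price M ·) := by
  classical
  set flo : ℝ := univ.inf' ⟨0, mem_univ (0 : Fin (K+1))⟩ (fun k => (M k).2) with hflo
  set g : Fin (K+1) → (Fin n → ℝ) → ℝ :=
    fun k v => if (∀ k', util M v k' ≤ util M v k) then (M k).2 else flo with hg
  have hrepr : ∀ v, price M v = univ.sup' ⟨0, mem_univ (0 : Fin (K+1))⟩ (fun k => g k v) := by
    intro v
    apply le_antisymm
    · obtain ⟨k, hk, hkp⟩ := exists_price_witness M v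
      rw [← hkp]
      have h1 : (M k).2 = g k v := by rw [hg]; simp only [if_pos hk]
      rw [h1]
      exact Finset.le_sup' (fun k => g k v) (mem_univ k)
    · apply Finset.sup'_le
      intro k _
      by_cases hk : ∀ k', util M v k' ≤ util M v k
      · have h1 : g k v = (M k).2 := by rw [hg]; simp only [if_pos hk]
        rw [h1]; exact price_ge M v hk
      · have h1 : g k v = flo := by rw [hg]; simp only [if_neg hk]
        rw [h1]
        obtain ⟨k₀, hk₀, hk₀p⟩ := exists_price_witness M v
        calc flo ≤ (M k₀).2 := Finset.inf'_le _ (mem_univ k₀)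
          _ = price M v := hk₀p
  have heq : (price M ·) = fun v => univ.sup' ⟨0, mem_univ (0 : Fin (K+1))⟩ (fun k => g k v) :=
    funext hrepr
  rw [heq]
  apply measurable_fin_sup'
  intro k
  apply Measurable.ite _ measurable_const measurable_const
  have : {v : Fin n → ℝ | ∀ k', util M v k' ≤ util M v k}
      = ⋂ k', {v | util M v k' ≤ util M v k} := by
    ext v; simp
  rw [this]
  exact MeasurableSet.iInter fun k' =>
    measurableSet_le (measurable_util M k') (measurable_util M k)

/-- Uniform bound on the price function. -/
lemma abs_price_le (M : Menu n K) (v : Fin n → ℝ) :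
    |price M v| ≤ univ.sup' ⟨0, mem_univ (0 : Fin (K+1))⟩ (fun k => |(M k).2|) := by
  obtain ⟨k, hk, hkp⟩ := exists_price_witness M v
  rw [← hkp]
  exact Finset.le_sup' (fun k => |(M k).2|) (mem_univ k)

lemma integrable_price (F : Measure (Fin n → ℝ)) [IsProbabilityMeasure F] (M : Menu n K) :
    Integrable (price M ·) F := by
  apply Integrable.mono' (integrable_const
    (univ.sup' ⟨0, mem_univ (0 : Fin (K+1))⟩ (fun k => |(M k).2|)))
    (measurable_price M).aestronglyMeasurable
  exact Filter.Eventually.of_forall fun v => by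
    simpa [Real.norm_eq_abs] using abs_price_le M v

lemma measurableSet_V : MeasurableSet (V n) := by
  have : V n = (⋂ j, ({v : Fin n → ℝ | 0 ≤ v j} ∩ {v | v j ≤ 1}))
      ∩ {v | ∑ j, v j ≤ 1} := by
    ext v
    simp only [V, Set.mem_setOf_eq, Set.mem_inter_iff, Set.mem_iInter]
  rw [this]
  apply MeasurableSet.inter
  · exact MeasurableSet.iInter fun j =>
      (measurableSet_le measurable_const (measurable_pi_apply j)).inter
        (measurableSet_le (measurable_pi_apply j) measurable_const)
  · exact measurableSet_le (Finset.measurable_sum _ fun j _ => measurable_pi_apply j)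
      measurable_const

lemma ae_mem_V (F : Measure (Fin n → ℝ)) [IsProbabilityMeasure F] (hFV : F (V n) = 1) :
    ∀ᵐ v ∂F, v ∈ V n := by
  have hc : F (V n)ᶜ = 0 := by
    rw [measure_compl measurableSet_V (measure_ne_top F _), hFV, measure_univ, tsub_self]
  rw [MeasureTheory.ae_iff]
  convert hc using 2
  rfl

/-- Key integral comparison: pointwise on `V` implies revenue comparison. -/
lemma Rev_sub_le (F : Measure (Fin n → ℝ)) [IsProbabilityMeasure F] (hFV : F (V n) = 1)
    {M M' : Menu n K} {c : ℝ}
    (hpt : ∀ v ∈ V n, price M v - c ≤ price M' v) :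
    Rev F M - c ≤ Rev F M' := by
  have hae : (fun v => price M v - c) ≤ᵐ[F] (price M' ·) := by
    filter_upwards [ae_mem_V F hFV] with v hv using hpt v hv
  have h2 := integral_mono_ae (f := fun v => price M v - c) (g := (price M' ·))
    ((integrable_price F M).sub (integrable_const c)) (integrable_price F M') hae
  rw [integral_sub (integrable_price F M) (integrable_const c), integral_const,
    probReal_univ] at h2
  simpa [Rev] using h2

lemma Rev_nonneg (F : Measure (Fin n → ℝ)) {M : Menu n K} (hM : ∀ k, 0 ≤ (M k).2) :
    0 ≤ Rev F M :=
  integral_nonneg fun v => price_nonneg hM v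

lemma Rev_le_one (F : Measure (Fin n → ℝ)) [IsProbabilityMeasure F] (hFV : F (V n) = 1)
    {M : Menu n K} (hM : IsMenu M) : Rev F M ≤ 1 := by
  have hae : (price M ·) ≤ᵐ[F] (fun _ => (1:ℝ)) := by
    filter_upwards [ae_mem_V F hFV] with v hv using price_le_one hM hv
  have h2 := integral_mono_ae (integrable_price F M) (integrable_const 1) hae
  rw [integral_const, probReal_univ] at h2
  simpa [Rev] using h2

end Meas


section PointwiseLemmas

variable {n K : ℕ}

lemma dotp_blend (v : Fin n → ℝ) (t : ℝ) (x y : Fin n → ℝ) :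
    dotp v (fun j => (1 - t) * x j + t * y j) = (1 - t) * dotp v x + t * dotp v y := by
  unfold dotp
  rw [Finset.mul_sum, Finset.mul_sum, ← Finset.sum_add_distrib]
  exact Finset.sum_congr rfl fun j _ => by ring

/-- Piece 1/5: uniformly scaling all prices by `1 - s`, `0 ≤ s ≤ min ε 1`,
loses at most `ε` pointwise on `V`. -/
lemma lemA {M : Menu n K} (hM : IsMenu M) {s ε : ℝ} (hs0 : 0 ≤ s) (hsε : s ≤ ε) (hs1 : s ≤ 1)
    {v : Fin n → ℝ} (hv : v ∈ V n) :
    price M v - ε ≤ price (fun k => ((M k).1, (1 - s) * (M k).2)) v := by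
  set N : Menu n K := fun k => ((M k).1, (1 - s) * (M k).2) with hN
  have hP0 : 0 ≤ price M v := price_nonneg hM.2.1 v
  have hP1 : price M v ≤ 1 := price_le_one hM hv
  rcases eq_or_lt_of_le hs0 with hs | hs
  · -- s = 0 : the menu is unchanged
    have hNM : N = M := by
      funext k
      show ((M k).1, (1 - s) * (M k).2) = M k
      rw [← hs]
      simp
    rw [hNM]
    linarith
  · obtain ⟨k₀, hk₀, hk₀p⟩ := exists_price_witness M v
    obtain ⟨k₁, hk₁, hk₁p⟩ := exists_price_witness N v
    have h1 : dotp v (M k₀).1 - (1 - s) * (M k₀).2 ≤ dotp v (M k₁).1 - (1 - s) * (M k₁).2 :=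
      hk₁ k₀
    have h2 : dotp v (M k₁).1 - (M k₁).2 ≤ dotp v (M k₀).1 - (M k₀).2 := hk₀ k₁
    have h3 : (M k₀).2 ≤ (M k₁).2 := by nlinarith
    have h4 : price N v = (1 - s) * (M k₁).2 := hk₁p.symm
    rw [h4, ← hk₀p]
    nlinarith [hM.2.1 k₁, hM.2.1 k₀]

/-- Piece 2/4: blending every option `k` towards a copy of the option `g k`, while
applying discount `1 - δ` to prices, loses at most `ε` pointwise on `V`,
provided every option has a cheaper `g`-fixed "representative" with
close-by allocation. -/
lemma lemB {M : Menu n K} (hM : IsMenu M) (g : Fin (K + 1) → Fin (K + 1))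
    {δ η ε : ℝ} (hδ0 : 0 < δ) (hδ1 : δ ≤ 1/2) (hδε : δ ≤ ε/2)
    (hη0 : 0 ≤ η) (hηδ : η ≤ δ * (ε/2))
    (hg : ∀ k, ∃ r, g r = r ∧ (M r).2 ≤ (M k).2 ∧
      ∀ v ∈ V n, dotp v (M k).1 - η ≤ dotp v (M r).1)
    {t : ℝ} (ht0 : 0 ≤ t) (ht1 : t ≤ 1) {v : Fin n → ℝ} (hv : v ∈ V n) :
    price M v - ε ≤
      price (fun k => (fun j => (1 - t) * (M k).1 j + t * (M (g k)).1 j,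
        (1 - δ) * ((1 - t) * (M k).2 + t * (M (g k)).2))) v := by
  set N : Menu n K := fun k => (fun j => (1 - t) * (M k).1 j + t * (M (g k)).1 j,
    (1 - δ) * ((1 - t) * (M k).2 + t * (M (g k)).2)) with hN
  obtain ⟨k₀, hk₀, hk₀p⟩ := exists_price_witness M v
  have hP1 : (M k₀).2 ≤ 1 := le_trans (le_of_eq hk₀p) (price_le_one hM hv)
  have hP0 : 0 ≤ (M k₀).2 := hM.2.1 k₀
  obtain ⟨r, hgr, hrp, hrx⟩ := hg k₀
  -- utility of each option of N
  have hutilN : ∀ k, util N v k = ((1 - t) * dotp v (M k).1 + t * dotp v (M (g k)).1)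
      - (1 - δ) * ((1 - t) * (M k).2 + t * (M (g k)).2) := by
    intro k
    show dotp v (fun j => (1 - t) * (M k).1 j + t * (M (g k)).1 j) - _ = _
    rw [dotp_blend]
  -- lower bound for the N-utility of the representative r of k₀
  have hNr : util N v r = dotp v (M r).1 - (1 - δ) * (M r).2 := by
    rw [hutilN r, hgr]
    ring
  have hLB : (dotp v (M k₀).1 - (M k₀).2) + δ * (M k₀).2 - η ≤ util N v r := by
    rw [hNr]
    have h1 : dotp v (M k₀).1 - η ≤ dotp v (M r).1 := hrx v hv
    have h2 : (1 - δ) * (M r).2 ≤ (1 - δ) * (M k₀).2 :=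
      mul_le_mul_of_nonneg_left hrp (by linarith)
    nlinarith
  -- the chosen option of N
  obtain ⟨k₁, hk₁, hk₁p⟩ := exists_price_witness N v
  set b : ℝ := (1 - t) * (M k₁).2 + t * (M (g k₁)).2 with hb
  have hb0 : 0 ≤ b := by
    have h1 := hM.2.1 k₁
    have h2 := hM.2.1 (g k₁)
    rw [hb]
    nlinarith
  have hIC1 : dotp v (M k₁).1 - (M k₁).2 ≤ dotp v (M k₀).1 - (M k₀).2 := hk₀ k₁
  have hIC2 : dotp v (M (g k₁)).1 - (M (g k₁)).2 ≤ dotp v (M k₀).1 - (M k₀).2 := hk₀ (g k₁)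
  have hchain : util N v k₁ ≤ (dotp v (M k₀).1 - (M k₀).2) + δ * b := by
    rw [hutilN k₁]
    nlinarith [mul_le_mul_of_nonneg_left hIC1 (by linarith : (0:ℝ) ≤ 1 - t),
      mul_le_mul_of_nonneg_left hIC2 ht0]
  have hkey : δ * (M k₀).2 - η ≤ δ * b := by
    have := hk₁ r
    linarith
  have hNk₁ : (N k₁).2 = (1 - δ) * b := rfl
  have hprice : (1 - δ) * b ≤ price N v := by
    rw [← hk₁p, hNk₁]
  -- final arithmetic
  have e1 : (1 - δ) * (δ * (M k₀).2 - η) ≤ (1 - δ) * (δ * b) :=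
    mul_le_mul_of_nonneg_left hkey (by linarith)
  have e2 : δ * δ ≤ δ * (ε / 2) := mul_le_mul_of_nonneg_left hδε hδ0.le
  have e3 : δ * δ * (M k₀).2 ≤ δ * δ := by nlinarith
  have e4 : (0:ℝ) ≤ δ * η := mul_nonneg hδ0.le hη0
  have e5 : δ * ((M k₀).2 - ε) ≤ δ * ((1 - δ) * b) := by nlinarith
  have hfin : (M k₀).2 - ε ≤ (1 - δ) * b := le_of_mul_le_mul_left e5 hδ0
  rw [← hk₀p]
  linarith

/-- Piece 3: the product cross segment. If every pair of "deals" of `X` and `Y` is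
realized jointly by some option, the price of any convex combination dominates the
convex combination of prices. -/
lemma lemC (X Y : Menu n K) (hcov : ∀ a b, ∃ w, X w = X a ∧ Y w = Y b)
    {lam : ℝ} (hl0 : 0 ≤ lam) (hl1 : lam ≤ 1) (v : Fin n → ℝ) :
    lam * price X v + (1 - lam) * price Y v ≤ price (comb lam X Y) v := by
  obtain ⟨a, ha, hap⟩ := exists_price_witness X v
  obtain ⟨c, hc, hcp⟩ := exists_price_witness Y v
  obtain ⟨w, hwX, hwY⟩ := hcov a c
  have hutil : ∀ k, util (comb lam X Y) v k = lam * util X v k + (1 - lam) * util Y v k := by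
    intro k
    show dotp v (fun j => lam * (X k).1 j + (1 - lam) * (Y k).1 j) - _ = _
    have hd : dotp v (fun j => lam * (X k).1 j + (1 - lam) * (Y k).1 j)
        = (1 - (1 - lam)) * dotp v (X k).1 + (1 - lam) * dotp v (Y k).1 := by
      have := dotp_blend v (1 - lam) (X k).1 (Y k).1
      simpa using this
    rw [hd]
    show _ - (lam * (X k).2 + (1 - lam) * (Y k).2) = _
    rw [util, util]
    ring
  have hwargmax : ∀ k, util (comb lam X Y) v k ≤ util (comb lam X Y) v w := by
    intro k
    rw [hutil k, hutil w]
    have h1 : util X v w = util X v a := by rw [util, util, hwX]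
    have h2 : util Y v w = util Y v c := by rw [util, util, hwY]
    rw [h1, h2]
    have h3 : util X v k ≤ util X v a := ha k
    have h4 : util Y v k ≤ util Y v c := hc k
    nlinarith
  have hwp : (comb lam X Y w).2 = lam * price X v + (1 - lam) * price Y v := by
    show lam * (X w).2 + (1 - lam) * (Y w).2 = _
    rw [hwX, hwY, hap, hcp]
  calc lam * price X v + (1 - lam) * price Y v = (comb lam X Y w).2 := hwp.symm
    _ ≤ price (comb lam X Y) v := price_ge _ v hwargmax

end PointwiseLemmas

section RevCross

variable {n K : ℕ}

lemma Rev_comb_ge (F : Measure (Fin n → ℝ)) [IsProbabilityMeasure F]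
    (X Y : Menu n K) (hcov : ∀ a b, ∃ w, X w = X a ∧ Y w = Y b)
    {lam : ℝ} (hl0 : 0 ≤ lam) (hl1 : lam ≤ 1) :
    lam * Rev F X + (1 - lam) * Rev F Y ≤ Rev F (comb lam X Y) := by
  have hint1 : Integrable (fun v => lam * price X v) F := (integrable_price F X).const_mul lam
  have hint2 : Integrable (fun v => (1 - lam) * price Y v) F :=
    (integrable_price F Y).const_mul _
  have hmono := integral_mono (f := fun v => lam * price X v + (1 - lam) * price Y v)
    (hint1.add hint2) (integrable_price F (comb lam X Y))
    (fun v => lemC X Y hcov hl0 hl1 v)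
  rw [integral_add hint1 hint2, integral_const_mul, integral_const_mul] at hmono
  exact hmono

end RevCross

section Grid

variable {n K : ℕ}

/-- Class (grid cell) of an allocation, at granularity `1/m`. -/
noncomputable def cls (m : ℕ) (x : Fin n → ℝ) : Fin n → ℕ := fun j => min (⌊x j * m⌋₊) (m - 1)

lemma cls_close {m : ℕ} (hm : 1 ≤ m) {a b : ℝ} (ha0 : 0 ≤ a) (ha1 : a ≤ 1)
    (hb0 : 0 ≤ b) (hb1 : b ≤ 1) (hab : min (⌊a * m⌋₊) (m - 1) = min (⌊b * m⌋₊) (m - 1)) :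
    a - b ≤ 1 / m := by
  have hmpos : (0:ℝ) < m := by exact_mod_cast hm
  -- for any c ∈ [0,1] : (cls c : ℝ) ≤ c * m ≤ cls c + 1
  have key : ∀ c : ℝ, 0 ≤ c → c ≤ 1 →
      ((min (⌊c * m⌋₊) (m - 1) : ℕ) : ℝ) ≤ c * m ∧
        c * m ≤ ((min (⌊c * m⌋₊) (m - 1) : ℕ) : ℝ) + 1 := by
    intro c hc0 hc1
    constructor
    · calc ((min (⌊c * m⌋₊) (m - 1) : ℕ) : ℝ) ≤ (⌊c * m⌋₊ : ℝ) := by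
            exact_mod_cast min_le_left _ _
        _ ≤ c * m := Nat.floor_le (by positivity)
    · by_cases hcase : ⌊c * m⌋₊ ≤ m - 1
      · rw [min_eq_left hcase]
        exact le_of_lt (Nat.lt_floor_add_one _)
      · push_neg at hcase
        have : min (⌊c * m⌋₊) (m - 1) = m - 1 := min_eq_right (le_of_lt hcase)
        rw [this]
        have h1 : ((m - 1 : ℕ) : ℝ) + 1 = (m : ℝ) := by
          have : (1:ℕ) ≤ m := hm
          push_cast [Nat.cast_sub this]
          ring
        rw [h1]
        nlinarith
  obtain ⟨ha2, ha3⟩ := key a ha0 ha1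
  obtain ⟨hb2, hb3⟩ := key b hb0 hb1
  rw [hab] at ha3
  rw [le_div_iff₀ hmpos]
  nlinarith [ha3, hb2]

/-- The representative (cheapest option) of a class, with the default option
representing its own class. -/
noncomputable def repc (M : Menu n K) (m : ℕ) (γ : Fin n → ℕ) : Fin (K + 1) :=
  if γ = cls m ((M 0).1) then 0
  else if h : (univ.filter (fun k => cls m ((M k).1) = γ)).Nonempty then
    Classical.choose (Finset.exists_min_image _ (fun k => (M k).2) h)
  else 0

/-- The set of representatives. -/
noncomputable def repS (M : Menu n K) (m : ℕ) : Finset (Fin (K + 1)) :=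
  univ.image (fun k => repc M m (cls m ((M k).1)))

lemma repc_spec (M : Menu n K) (hM : IsMenu M) (m : ℕ) (k : Fin (K + 1)) :
    cls m ((M (repc M m (cls m ((M k).1)))).1) = cls m ((M k).1) ∧
      (M (repc M m (cls m ((M k).1)))).2 ≤ (M k).2 := by
  unfold repc
  split_ifs with h1 h2
  · refine ⟨h1.symm, ?_⟩
    have : (M 0).2 = 0 := by rw [hM.2.2]; rfl
    rw [this]
    exact hM.2.1 k
  · obtain ⟨hmem, hmin⟩ := Classical.choose_spec
      (Finset.exists_min_image _ (fun k => (M k).2) h2)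
    have hcls := (mem_filter.1 hmem).2
    exact ⟨hcls, hmin k (mem_filter.2 ⟨mem_univ k, rfl⟩)⟩
  · exact absurd ⟨k, mem_filter.2 ⟨mem_univ k, rfl⟩⟩ h2

lemma zero_mem_repS (M : Menu n K) (m : ℕ) : 0 ∈ repS M m := by
  apply mem_image.2 ⟨0, mem_univ 0, ?_⟩
  unfold repc
  rw [if_pos rfl]

lemma repc_mem_repS (M : Menu n K) (m : ℕ) (k : Fin (K + 1)) :
    repc M m (cls m ((M k).1)) ∈ repS M m :=
  mem_image.2 ⟨k, mem_univ k, rfl⟩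

lemma repS_card_le (M : Menu n K) (m : ℕ) (hm : 1 ≤ m) : (repS M m).card ≤ m ^ n := by
  have h1 : repS M m = (univ.image (fun k => cls m ((M k).1))).image (repc M m) := by
    rw [Finset.image_image]
    rfl
  rw [h1]
  calc ((univ.image (fun k => cls m ((M k).1))).image (repc M m)).card
      ≤ (univ.image (fun k => cls m ((M k).1))).card := Finset.card_image_le
    _ ≤ (Fintype.piFinset (fun _ : Fin n => Finset.range m)).card := by
        apply Finset.card_le_card
        intro γ hγ
        obtain ⟨k, -, rfl⟩ := mem_image.1 hγ
        apply Fintype.mem_piFinset.2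
        intro j
        apply Finset.mem_range.2
        calc cls m ((M k).1) j ≤ m - 1 := min_le_right _ _
          _ < m := by omega
    _ = m ^ n := by
        rw [Fintype.card_piFinset]
        simp
end Grid

section Pairing

variable {K : ℕ}

/-- Given `0 ∈ S1`, `0 ∈ S2` with `|S1|·|S2| ≤ K+1`, there are maps `g1, g2` into
`S1, S2`, fixing `S1` resp. `S2` pointwise, jointly covering all of `S1 × S2`. -/
lemma exists_pairing (S1 S2 : Finset (Fin (K + 1))) (h01 : 0 ∈ S1) (h02 : 0 ∈ S2)
    (hcard : S1.card * S2.card ≤ K + 1) :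
    ∃ g1 g2 : Fin (K + 1) → Fin (K + 1),
      (∀ k, g1 k ∈ S1) ∧ (∀ k, g2 k ∈ S2) ∧ (∀ k ∈ S1, g1 k = k) ∧ (∀ k ∈ S2, g2 k = k) ∧
      (∀ r ∈ S1, ∀ q ∈ S2, ∃ w, g1 w = r ∧ g2 w = q) := by
  classical
  set π : Fin (K + 1) → Fin (K + 1) × Fin (K + 1) :=
    fun k => (if k ∈ S1 then k else 0, if k ∈ S2 then k else 0) with hπ
  set PRE : Finset (Fin (K + 1)) := S1 ∪ S2 with hPRE
  have hπprod : ∀ k, π k ∈ S1 ×ˢ S2 := by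
    intro k
    apply Finset.mem_product.2
    constructor
    · by_cases h : k ∈ S1 <;> simp [hπ, h, h01]
    · by_cases h : k ∈ S2 <;> simp [hπ, h, h02]
  -- `π` is injective on `PRE` since `k` can be recovered from `π k`
  set recov : Fin (K + 1) × Fin (K + 1) → Fin (K + 1) :=
    fun p => if p.1 ≠ 0 then p.1 else p.2 with hrecov
  have hrec : ∀ k ∈ PRE, recov (π k) = k := by
    intro k hk
    by_cases h1 : k ∈ S1
    · by_cases h0 : k = 0
      · subst h0
        simp [hπ, hrecov, h01, h02]
      · simp [hπ, hrecov, h1, h0]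
    · have h2 : k ∈ S2 := (Finset.mem_union.1 hk).resolve_left h1
      have h0 : k ≠ 0 := fun h => h1 (h ▸ h01)
      simp [hπ, hrecov, h1, h2, h0]
  have hπinj : Set.InjOn π ↑PRE := by
    intro k hk k' hk' heq
    have := congrArg recov heq
    rwa [hrec k hk, hrec k' hk'] at this
  set REMP : Finset (Fin (K + 1) × Fin (K + 1)) := (S1 ×ˢ S2) \ PRE.image π with hREMP
  set REST : Finset (Fin (K + 1)) := univ \ PRE with hREST
  have hcards : REMP.card ≤ REST.card := by
    have h1 : REMP.card = S1.card * S2.card - PRE.card := by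
      rw [hREMP, Finset.card_sdiff_of_subset]
      · rw [Finset.card_image_of_injOn hπinj, Finset.card_product]
      · intro p hp
        obtain ⟨k, -, rfl⟩ := Finset.mem_image.1 hp
        exact hπprod k
    have h2 : REST.card = (K + 1) - PRE.card := by
      rw [hREST, Finset.card_sdiff_of_subset (Finset.subset_univ _), Finset.card_univ, Fintype.card_fin]
    rw [h1, h2]
    omega
  -- an embedding of REMP into REST
  have hemb : Nonempty (↥REMP ↪ ↥REST) := by
    apply Function.Embedding.nonempty_of_card_le
    simpa [Fintype.card_coe] using hcards
  obtain ⟨e⟩ := hemb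
  -- the pairing map
  set g : Fin (K + 1) → Fin (K + 1) × Fin (K + 1) := fun k =>
    if k ∈ PRE then π k
    else if h : ∃ p : ↥REMP, (↑(e p) : Fin (K + 1)) = k then ↑(Classical.choose h)
    else ((0 : Fin (K+1)), (0 : Fin (K+1))) with hgdef
  have hgmem : ∀ k, g k ∈ S1 ×ˢ S2 := by
    intro k
    rw [hgdef]
    simp only
    split_ifs with h1 h2
    · exact hπprod k
    · have hmem2 : (↑(Classical.choose h2) : Fin (K+1) × Fin (K+1)) ∈ REMP :=
        (Classical.choose h2).2
      exact (Finset.mem_sdiff.1 hmem2).1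
    · exact Finset.mem_product.2 ⟨h01, h02⟩
  refine ⟨fun k => (g k).1, fun k => (g k).2, ?_, ?_, ?_, ?_, ?_⟩
  · intro k; exact (Finset.mem_product.1 (hgmem k)).1
  · intro k; exact (Finset.mem_product.1 (hgmem k)).2
  · intro k hk
    have hkPRE : k ∈ PRE := Finset.mem_union_left _ hk
    rw [hgdef]
    simp only [if_pos hkPRE, hπ, if_pos hk]
  · intro k hk
    have hkPRE : k ∈ PRE := Finset.mem_union_right _ hk
    rw [hgdef]
    simp only [if_pos hkPRE, hπ, if_pos hk]
  · intro r hr q hq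
    by_cases him : (r, q) ∈ PRE.image π
    · obtain ⟨k, hkPRE, hπk⟩ := Finset.mem_image.1 him
      refine ⟨k, ?_, ?_⟩
      · rw [hgdef]; simp only [if_pos hkPRE, hπk]
      · rw [hgdef]; simp only [if_pos hkPRE, hπk]
    · have hmem : (r, q) ∈ REMP := by
        rw [hREMP]
        exact Finset.mem_sdiff.2 ⟨Finset.mem_product.2 ⟨hr, hq⟩, him⟩
      set p : ↥REMP := ⟨(r, q), hmem⟩ with hp
      have hrest : (↑(e p) : Fin (K + 1)) ∈ REST := (e p).2
      have hnPRE : (↑(e p) : Fin (K + 1)) ∉ PRE := (Finset.mem_sdiff.1 hrest).2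
      have hex : ∃ p' : ↥REMP, (↑(e p') : Fin (K + 1)) = ↑(e p) := ⟨p, rfl⟩
      have hch : Classical.choose hex = p := by
        have hspec := Classical.choose_spec hex
        have : e (Classical.choose hex) = e p := Subtype.ext hspec
        exact e.injective this
      have hgw : g (↑(e p) : Fin (K + 1)) = (r, q) := by
        rw [hgdef]
        simp only [if_neg hnPRE, dif_pos hex, hch, hp]
        exact (if_neg hnPRE).trans (dif_pos hex)
      refine ⟨↑(e p), ?_, ?_⟩
      · show (g (↑(e p) : Fin (K + 1))).1 = r
        rw [hgw]
      · show (g (↑(e p) : Fin (K + 1))).2 = q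
        rw [hgw]
end Pairing

section MainAux

variable {n K : ℕ}

lemma dotp_sub_le {v x y : Fin n → ℝ} (hv : v ∈ V n) {c : ℝ} (hc : 0 ≤ c)
    (h : ∀ j, x j - y j ≤ c) : dotp v x - c ≤ dotp v y := by
  have h1 : dotp v x - dotp v y ≤ c := by
    have e1 : dotp v x - dotp v y = ∑ j, v j * (x j - y j) := by
      unfold dotp
      rw [← Finset.sum_sub_distrib]
      exact Finset.sum_congr rfl fun j _ => by ring
    rw [e1]
    calc ∑ j, v j * (x j - y j) ≤ ∑ j, v j * c := by
          apply Finset.sum_le_sum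
          intro j _
          exact mul_le_mul_of_nonneg_left (h j) (hv.1 j).1
      _ = (∑ j, v j) * c := by rw [← Finset.sum_mul]
      _ ≤ 1 * c := mul_le_mul_of_nonneg_right hv.2 hc
      _ = c := one_mul c
  linarith

lemma comb_price_nonneg {A B : Menu n K} (hA : IsMenu A) (hB : IsMenu B)
    {lam : ℝ} (hl0 : 0 ≤ lam) (hl1 : lam ≤ 1) (k : Fin (K + 1)) :
    0 ≤ (comb lam A B k).2 := by
  show 0 ≤ lam * (A k).2 + (1 - lam) * (B k).2
  have := hA.2.1 k
  have := hB.2.1 k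
  nlinarith

lemma IsMenu_comb {A B : Menu n K} (hA : IsMenu A) (hB : IsMenu B)
    {lam : ℝ} (hl0 : 0 ≤ lam) (hl1 : lam ≤ 1) : IsMenu (comb lam A B) := by
  refine ⟨fun k j => ?_, comb_price_nonneg hA hB hl0 hl1, ?_⟩
  · have h1 := (hA.1 k j).1
    have h2 := (hA.1 k j).2
    have h3 := (hB.1 k j).1
    have h4 := (hB.1 k j).2
    constructor
    · show 0 ≤ lam * (A k).1 j + (1 - lam) * (B k).1 j
      nlinarith
    · show lam * (A k).1 j + (1 - lam) * (B k).1 j ≤ 1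
      nlinarith
  · show (fun j => lam * (A 0).1 j + (1 - lam) * (B 0).1 j,
      lam * (A 0).2 + (1 - lam) * (B 0).2) = 0
    rw [hA.2.2, hB.2.2]
    apply Prod.ext
    · funext j
      show lam * (0 : (Fin n → ℝ) × ℝ).1 j + (1 - lam) * (0 : (Fin n → ℝ) × ℝ).1 j = _
      simp
    · show lam * (0 : (Fin n → ℝ) × ℝ).2 + (1 - lam) * (0 : (Fin n → ℝ) × ℝ).2 = _
      simp

end MainAux

set_option maxHeartbeats 1000000 in
/-- For `ε > 0`, any two RochetNet menus `M₁`, `M₂` with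
`K + 1 ≥ ⌈4/ε²⌉^(2n)` options are `ε`-mode-connected via a piecewise linear path
with five linear pieces. -/
theorem statement5 {n K : ℕ} (F : Measure (Fin n → ℝ)) [IsProbabilityMeasure F]
    (hFV : F (V n) = 1) (ε : ℝ) (hε : 0 < ε)
    (hK : ⌈4 / ε ^ 2⌉₊ ^ (2 * n) ≤ K + 1)
    (M₁ M₂ : Menu n K) (hM₁ : IsMenu M₁) (hM₂ : IsMenu M₂) :
    PLConnected F M₁ M₂ ε 5 := by
  classical
  by_cases hε1 : (1:ℝ) ≤ ε
  · -- trivial case: any valid path works since revenues are in [0,1]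
    refine ⟨![M₁, M₁, M₁, M₁, M₁, M₂], rfl, rfl, ?_, ?_⟩
    · intro i
      fin_cases i <;> first | exact hM₁ | exact hM₂
    · intro i lam hlam
      have hmin : min (Rev F M₁) (Rev F M₂) ≤ 1 :=
        le_trans (min_le_left _ _) (Rev_le_one F hFV hM₁)
      have hval : ∀ j : Fin 6, IsMenu ((![M₁, M₁, M₁, M₁, M₁, M₂] : Fin 6 → Menu n K) j) := by
        intro j
        fin_cases j <;> first | exact hM₁ | exact hM₂
      have h0 : 0 ≤ Rev F (comb lam (![M₁, M₁, M₁, M₁, M₁, M₂] i.castSucc)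
          (![M₁, M₁, M₁, M₁, M₁, M₂] i.succ)) :=
        Rev_nonneg F (comb_price_nonneg (hval _) (hval _) hlam.1 hlam.2)
      linarith
  · push_neg at hε1
    -- main construction
    set δ : ℝ := ε / 2 with hδdef
    have hδ0 : 0 < δ := by rw [hδdef]; linarith
    have hδhalf : δ ≤ 1/2 := by rw [hδdef]; linarith
    have hδε : δ ≤ ε/2 := le_of_eq hδdef
    set m : ℕ := ⌈4 / ε ^ 2⌉₊ with hmdef
    have hm1 : 1 ≤ m := by
      rw [hmdef]
      apply Nat.one_le_iff_ne_zero.2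
      apply Nat.pos_iff_ne_zero.1
      apply Nat.ceil_pos.2
      positivity
    have hmR : (4:ℝ) / ε ^ 2 ≤ (m:ℝ) := by rw [hmdef]; exact Nat.le_ceil _
    have hm0 : (0:ℝ) < m := by
      have : (1:ℝ) ≤ (m:ℝ) := by exact_mod_cast hm1
      linarith
    set η : ℝ := 1 / (m:ℝ) with hηdef
    have hη0 : 0 ≤ η := by rw [hηdef]; positivity
    have hηδ : η ≤ δ * (ε/2) := by
      have hε2 : (0:ℝ) < ε ^ 2 := by positivity
      have h4 : (4:ℝ) ≤ (m:ℝ) * ε ^ 2 := by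
        rw [div_le_iff₀ hε2] at hmR
        linarith
      rw [hηdef, hδdef, div_le_iff₀ hm0]
      nlinarith
    -- representative sets
    set S1 : Finset (Fin (K+1)) := repS M₁ m with hS1def
    set S2 : Finset (Fin (K+1)) := repS M₂ m with hS2def
    have hcard : S1.card * S2.card ≤ K + 1 := by
      calc S1.card * S2.card ≤ m ^ n * m ^ n :=
            Nat.mul_le_mul (repS_card_le M₁ m hm1) (repS_card_le M₂ m hm1)
        _ = m ^ (2 * n) := by rw [← pow_add, two_mul]
        _ ≤ K + 1 := hK
    obtain ⟨g1, g2, hg1S, hg2S, hg1fix, hg2fix, hcov⟩ :=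
      exists_pairing S1 S2 (zero_mem_repS M₁ m) (zero_mem_repS M₂ m) hcard
    -- lemB hypotheses for both menus
    have hrepr1 : ∀ k, ∃ r, g1 r = r ∧ (M₁ r).2 ≤ (M₁ k).2 ∧
        ∀ v ∈ V n, dotp v (M₁ k).1 - η ≤ dotp v (M₁ r).1 := by
      intro k
      obtain ⟨hcls, hprice⟩ := repc_spec M₁ hM₁ m k
      refine ⟨repc M₁ m (cls m ((M₁ k).1)), hg1fix _ (repc_mem_repS M₁ m k), hprice, ?_⟩
      intro v hv
      apply dotp_sub_le hv hη0
      intro j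
      have hj : min (⌊(M₁ k).1 j * m⌋₊) (m - 1)
          = min (⌊(M₁ (repc M₁ m (cls m ((M₁ k).1)))).1 j * m⌋₊) (m - 1) := by
        have := congrFun hcls j
        exact this.symm
      exact cls_close hm1 ((hM₁.1 k j).1) ((hM₁.1 k j).2)
        ((hM₁.1 _ j).1) ((hM₁.1 _ j).2) hj
    have hrepr2 : ∀ k, ∃ r, g2 r = r ∧ (M₂ r).2 ≤ (M₂ k).2 ∧
        ∀ v ∈ V n, dotp v (M₂ k).1 - η ≤ dotp v (M₂ r).1 := by
      intro k
      obtain ⟨hcls, hprice⟩ := repc_spec M₂ hM₂ m k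
      refine ⟨repc M₂ m (cls m ((M₂ k).1)), hg2fix _ (repc_mem_repS M₂ m k), hprice, ?_⟩
      intro v hv
      apply dotp_sub_le hv hη0
      intro j
      have hj : min (⌊(M₂ k).1 j * m⌋₊) (m - 1)
          = min (⌊(M₂ (repc M₂ m (cls m ((M₂ k).1)))).1 j * m⌋₊) (m - 1) := by
        have := congrFun hcls j
        exact this.symm
      exact cls_close hm1 ((hM₂.1 k j).1) ((hM₂.1 k j).2)
        ((hM₂.1 _ j).1) ((hM₂.1 _ j).2) hj
    -- the five path menus
    set M1d : Menu n K := fun k => ((M₁ k).1, (1 - δ) * (M₁ k).2) with hM1ddef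
    set M2d : Menu n K := fun k => ((M₂ k).1, (1 - δ) * (M₂ k).2) with hM2ddef
    set X : Menu n K := fun k => ((M₁ (g1 k)).1, (1 - δ) * (M₁ (g1 k)).2) with hXdef
    set Y : Menu n K := fun k => ((M₂ (g2 k)).1, (1 - δ) * (M₂ (g2 k)).2) with hYdef
    have hδ1' : (0:ℝ) ≤ 1 - δ := by linarith
    have hM1d : IsMenu M1d := by
      refine ⟨fun k j => hM₁.1 k j, fun k => mul_nonneg hδ1' (hM₁.2.1 k), ?_⟩
      show ((M₁ 0).1, (1 - δ) * (M₁ 0).2) = 0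
      rw [hM₁.2.2]
      apply Prod.ext
      · rfl
      · show (1 - δ) * (0 : (Fin n → ℝ) × ℝ).2 = _
        simp
    have hM2d : IsMenu M2d := by
      refine ⟨fun k j => hM₂.1 k j, fun k => mul_nonneg hδ1' (hM₂.2.1 k), ?_⟩
      show ((M₂ 0).1, (1 - δ) * (M₂ 0).2) = 0
      rw [hM₂.2.2]
      apply Prod.ext
      · rfl
      · show (1 - δ) * (0 : (Fin n → ℝ) × ℝ).2 = _
        simp
    have hg10 : g1 0 = 0 := hg1fix 0 (zero_mem_repS M₁ m)
    have hg20 : g2 0 = 0 := hg2fix 0 (zero_mem_repS M₂ m)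
    have hX : IsMenu X := by
      refine ⟨fun k j => hM₁.1 _ j, fun k => mul_nonneg hδ1' (hM₁.2.1 _), ?_⟩
      show ((M₁ (g1 0)).1, (1 - δ) * (M₁ (g1 0)).2) = 0
      rw [hg10, hM₁.2.2]
      apply Prod.ext
      · rfl
      · show (1 - δ) * (0 : (Fin n → ℝ) × ℝ).2 = _
        simp
    have hY : IsMenu Y := by
      refine ⟨fun k j => hM₂.1 _ j, fun k => mul_nonneg hδ1' (hM₂.2.1 _), ?_⟩
      show ((M₂ (g2 0)).1, (1 - δ) * (M₂ (g2 0)).2) = 0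
      rw [hg20, hM₂.2.2]
      apply Prod.ext
      · rfl
      · show (1 - δ) * (0 : (Fin n → ℝ) × ℝ).2 = _
        simp
    -- coverage for the cross segment
    have hcovXY : ∀ a b, ∃ w, X w = X a ∧ Y w = Y b := by
      intro a b
      obtain ⟨w, hw1, hw2⟩ := hcov (g1 a) (hg1S a) (g2 b) (hg2S b)
      refine ⟨w, ?_, ?_⟩
      · show ((M₁ (g1 w)).1, (1 - δ) * (M₁ (g1 w)).2) = ((M₁ (g1 a)).1, (1 - δ) * (M₁ (g1 a)).2)
        rw [hw1]
      · show ((M₂ (g2 w)).1, (1 - δ) * (M₂ (g2 w)).2) = ((M₂ (g2 b)).1, (1 - δ) * (M₂ (g2 b)).2)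
        rw [hw2]
    -- revenue bounds for the two reduced product menus
    have hXbound : Rev F M₁ - ε ≤ Rev F X := by
      have hmenuX : X = (fun k => (fun j => (1 - 1) * (M₁ k).1 j + 1 * (M₁ (g1 k)).1 j,
          (1 - δ) * ((1 - 1) * (M₁ k).2 + 1 * (M₁ (g1 k)).2))) := by
        funext k
        apply Prod.ext
        · funext j
          show (M₁ (g1 k)).1 j = (1 - 1) * (M₁ k).1 j + 1 * (M₁ (g1 k)).1 j
          ring
        · show (1 - δ) * (M₁ (g1 k)).2 = (1 - δ) * ((1 - 1) * (M₁ k).2 + 1 * (M₁ (g1 k)).2)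
          ring
      rw [hmenuX]
      exact Rev_sub_le F hFV (fun v hv =>
        lemB hM₁ g1 hδ0 hδhalf hδε hη0 hηδ hrepr1 zero_le_one le_rfl hv)
    have hYbound : Rev F M₂ - ε ≤ Rev F Y := by
      have hmenuY : Y = (fun k => (fun j => (1 - 1) * (M₂ k).1 j + 1 * (M₂ (g2 k)).1 j,
          (1 - δ) * ((1 - 1) * (M₂ k).2 + 1 * (M₂ (g2 k)).2))) := by
        funext k
        apply Prod.ext
        · funext j
          show (M₂ (g2 k)).1 j = (1 - 1) * (M₂ k).1 j + 1 * (M₂ (g2 k)).1 j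
          ring
        · show (1 - δ) * (M₂ (g2 k)).2 = (1 - δ) * ((1 - 1) * (M₂ k).2 + 1 * (M₂ (g2 k)).2)
          ring
      rw [hmenuY]
      exact Rev_sub_le F hFV (fun v hv =>
        lemB hM₂ g2 hδ0 hδhalf hδε hη0 hηδ hrepr2 zero_le_one le_rfl hv)
    have hsA : ∀ lam' : ℝ, 0 ≤ lam' → lam' ≤ 1 →
        (0 ≤ lam' * δ ∧ lam' * δ ≤ ε ∧ lam' * δ ≤ 1) := by
      intro lam' h0 h1
      have h2 : lam' * δ ≤ 1 * δ := mul_le_mul_of_nonneg_right h1 hδ0.le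
      exact ⟨mul_nonneg h0 hδ0.le, by linarith, by linarith⟩
    have hmin1 : min (Rev F M₁) (Rev F M₂) ≤ Rev F M₁ := min_le_left _ _
    have hmin2 : min (Rev F M₁) (Rev F M₂) ≤ Rev F M₂ := min_le_right _ _
    -- the path
    refine ⟨![M₁, M1d, X, Y, M2d, M₂], rfl, rfl, ?_, ?_⟩
    · intro i
      fin_cases i
      · exact hM₁
      · exact hM1d
      · exact hX
      · exact hY
      · exact hM2d
      · exact hM₂
    · intro i lam hlam
      obtain ⟨hl0, hl1⟩ := hlam
      fin_cases i
      · -- segment 0 : M₁ → M1d (price scaling)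
        show min (Rev F M₁) (Rev F M₂) - ε ≤ Rev F (comb lam M₁ M1d)
        have hmenu : comb lam M₁ M1d
            = (fun k => ((M₁ k).1, (1 - (1 - lam) * δ) * (M₁ k).2)) := by
          funext k
          apply Prod.ext
          · funext j
            show lam * (M₁ k).1 j + (1 - lam) * (M₁ k).1 j = (M₁ k).1 j
            ring
          · show lam * (M₁ k).2 + (1 - lam) * ((1 - δ) * (M₁ k).2)
              = (1 - (1 - lam) * δ) * (M₁ k).2
            ring
        rw [hmenu]
        have h := Rev_sub_le F hFV (M := M₁) (c := ε) (fun v hv =>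
          lemA hM₁ (s := (1 - lam) * δ) (hsA (1 - lam) (by linarith) (by linarith)).1
            (hsA (1 - lam) (by linarith) (by linarith)).2.1
            (hsA (1 - lam) (by linarith) (by linarith)).2.2 hv)
        linarith
      · -- segment 1 : M1d → X (reduction of M₁)
        show min (Rev F M₁) (Rev F M₂) - ε ≤ Rev F (comb lam M1d X)
        have hmenu : comb lam M1d X
            = (fun k => (fun j => (1 - (1 - lam)) * (M₁ k).1 j + (1 - lam) * (M₁ (g1 k)).1 j,
              (1 - δ) * ((1 - (1 - lam)) * (M₁ k).2 + (1 - lam) * (M₁ (g1 k)).2))) := by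
          funext k
          apply Prod.ext
          · funext j
            show lam * (M₁ k).1 j + (1 - lam) * (M₁ (g1 k)).1 j = _
            ring
          · show lam * ((1 - δ) * (M₁ k).2) + (1 - lam) * ((1 - δ) * (M₁ (g1 k)).2) = _
            ring
        rw [hmenu]
        have h := Rev_sub_le F hFV (M := M₁) (c := ε) (fun v hv =>
          lemB hM₁ g1 hδ0 hδhalf hδε hη0 hηδ hrepr1 (t := 1 - lam)
            (by linarith) (by linarith) hv)
        linarith
      · -- segment 2 : X → Y (the product cross)
        show min (Rev F M₁) (Rev F M₂) - ε ≤ Rev F (comb lam X Y)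
        have hcross := Rev_comb_ge F X Y hcovXY hl0 hl1
        have e1 : lam * (Rev F M₁ - ε) ≤ lam * Rev F X :=
          mul_le_mul_of_nonneg_left hXbound hl0
        have e2 : (1 - lam) * (Rev F M₂ - ε) ≤ (1 - lam) * Rev F Y :=
          mul_le_mul_of_nonneg_left hYbound (by linarith)
        have e3 : lam * (min (Rev F M₁) (Rev F M₂) - ε) ≤ lam * (Rev F M₁ - ε) :=
          mul_le_mul_of_nonneg_left (by linarith) hl0
        have e4 : (1 - lam) * (min (Rev F M₁) (Rev F M₂) - ε) ≤ (1 - lam) * (Rev F M₂ - ε) :=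
          mul_le_mul_of_nonneg_left (by linarith) (by linarith)
        have e5 : lam * (min (Rev F M₁) (Rev F M₂) - ε)
            + (1 - lam) * (min (Rev F M₁) (Rev F M₂) - ε)
            = min (Rev F M₁) (Rev F M₂) - ε := by ring
        linarith
      · -- segment 3 : Y → M2d (un-reduction of M₂)
        show min (Rev F M₁) (Rev F M₂) - ε ≤ Rev F (comb lam Y M2d)
        have hmenu : comb lam Y M2d
            = (fun k => (fun j => (1 - lam) * (M₂ k).1 j + lam * (M₂ (g2 k)).1 j,
              (1 - δ) * ((1 - lam) * (M₂ k).2 + lam * (M₂ (g2 k)).2))) := by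
          funext k
          apply Prod.ext
          · funext j
            show lam * (M₂ (g2 k)).1 j + (1 - lam) * (M₂ k).1 j = _
            ring
          · show lam * ((1 - δ) * (M₂ (g2 k)).2) + (1 - lam) * ((1 - δ) * (M₂ k).2) = _
            ring
        rw [hmenu]
        have h := Rev_sub_le F hFV (M := M₂) (c := ε) (fun v hv =>
          lemB hM₂ g2 hδ0 hδhalf hδε hη0 hηδ hrepr2 (t := lam) hl0 hl1 hv)
        linarith
      · -- segment 4 : M2d → M₂ (price un-scaling)
        show min (Rev F M₁) (Rev F M₂) - ε ≤ Rev F (comb lam M2d M₂)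
        have hmenu : comb lam M2d M₂
            = (fun k => ((M₂ k).1, (1 - lam * δ) * (M₂ k).2)) := by
          funext k
          apply Prod.ext
          · funext j
            show lam * (M₂ k).1 j + (1 - lam) * (M₂ k).1 j = (M₂ k).1 j
            ring
          · show lam * ((1 - δ) * (M₂ k).2) + (1 - lam) * (M₂ k).2
              = (1 - lam * δ) * (M₂ k).2
            ring
        rw [hmenu]
        have h := Rev_sub_le F hFV (M := M₂) (c := ε) (fun v hv =>
          lemA hM₂ (s := lam * δ) (hsA lam hl0 hl1).1
            (hsA lam hl0 hl1).2.1 (hsA lam hl0 hl1).2.2 hv)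
        linarith


end RN
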